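/- Σ_{A,B,C ∈ S_min, A ≠ B, B ≠ C, C ≠ A} μ(A)μ(B)μ(C)·T₁(sup(A, B))·T₂(sup(B, C))·T₃(sup(C, A)) = Σ_{L ∈ S \ S_min} μ(L)³(1 − p_L⁻¹)(1 − 2p_L⁻¹)·T₁(L)T₂(L)T₃(L) + Σ_{L ∈ S \ S_min} μ(L)(1 − p_L⁻¹)·Σ_{B ∈ S \ S_min, B < L} μ(B)²(1 − p_B⁻¹)·[T₁(L)T₂(L)T₃(B) + T₂(L)T₃(L)T₁(B) + T₃(L)T₁(L)T₂(B)]. -/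

import Mathlib

open scoped Classical

set_option linter.unusedSectionVars false
set_option linter.unusedVariables false

namespace TraceCubicAux

variable {S : Type*} [Fintype S] [SemilatticeSup S]

/-- children of `L` -/
noncomputable def childF (L : S) : Finset S := Finset.univ.filter (fun J : S => J ⋖ L)
/-- minimal elements below `L` -/
noncomputable def minF (L : S) : Finset S := Finset.univ.filter (fun A : S => IsMin A ∧ A ≤ L)

lemma mem_minF {L A : S} : A ∈ minF L ↔ IsMin A ∧ A ≤ L := by simp [minF]
lemma mem_childF {L c : S} : c ∈ childF L ↔ c ⋖ L := by simp [childF]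

lemma exists_child {A L : S} (h : A < L) : ∃ c, A ≤ c ∧ c ⋖ L := by
  obtain ⟨c, hc, hmax⟩ := (Finset.univ.filter (fun y : S => A ≤ y ∧ y < L)).exists_maximal
    ⟨A, by simp [h]⟩
  simp only [Finset.mem_filter, Finset.mem_univ, true_and] at hc hmax
  refine ⟨c, hc.1, hc.2, fun d hcd hdL => ?_⟩
  exact absurd (hmax ⟨hc.1.trans hcd.le, hdL⟩ hcd.le) hcd.not_ge

lemma child_unique (hchain : ∀ x y z : S, x ≤ y → x ≤ z → y ≤ z ∨ z ≤ y)
    {A c₁ c₂ L : S} (h1 : A ≤ c₁) (h2 : A ≤ c₂) (hc1 : c₁ ⋖ L) (hc2 : c₂ ⋖ L) :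
    c₁ = c₂ := by
  rcases hchain A c₁ c₂ h1 h2 with h | h
  · rcases h.lt_or_eq with h' | h'
    · exact absurd hc2.lt (hc1.2 h')
    · exact h'
  · rcases h.lt_or_eq with h' | h'
    · exact absurd hc1.lt (hc2.2 h')
    · exact h'.symm

lemma join_eq_iff {x y L : S} (hx : x ≤ L) (hy : y ≤ L) :
    x ⊔ y = L ↔ ∀ c, c ⋖ L → x ≤ c → ¬ y ≤ c := by
  constructor
  · rintro h c hc hxc hyc
    exact absurd (h ▸ sup_le hxc hyc) hc.lt.not_ge
  · intro h
    rcases (sup_le hx hy).lt_or_eq with h' | h'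
    · obtain ⟨c, hcc, hc⟩ := exists_child h'
      exact absurd (le_sup_right.trans hcc) (h c hc (le_sup_left.trans hcc))
    · exact h'

lemma not_isMin_of_lt {M L : S} (h : M < L) : ¬ IsMin L :=
  fun hL => absurd (hL h.le) h.not_ge

/-- the sets of minimal elements below distinct children are disjoint, and their
union is the set of minimal elements below `L`. -/
lemma minF_eq_biUnion (hchain : ∀ x y z : S, x ≤ y → x ≤ z → y ≤ z ∨ z ≤ y)
    {L : S} (hL : ¬ IsMin L) :
    minF L = (childF L).biUnion (fun c => minF c) := by
  ext A
  simp only [Finset.mem_biUnion, mem_minF, mem_childF]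
  constructor
  · rintro ⟨hA, hAL⟩
    have hlt : A < L := lt_of_le_of_ne hAL (by rintro rfl; exact hL hA)
    obtain ⟨c, hAc, hc⟩ := exists_child hlt
    exact ⟨c, hc, hA, hAc⟩
  · rintro ⟨c, hc, hA, hAc⟩
    exact ⟨hA, hAc.trans hc.lt.le⟩

lemma sum_minF_decomp (hchain : ∀ x y z : S, x ≤ y → x ≤ z → y ≤ z ∨ z ≤ y)
    {L : S} (hL : ¬ IsMin L) (f : S → ℝ) :
    ∑ A ∈ minF L, f A = ∑ c ∈ childF L, ∑ A ∈ minF c, f A := by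
  rw [minF_eq_biUnion hchain hL, Finset.sum_biUnion]
  intro c₁ h1 c₂ h2 hne
  refine Finset.disjoint_left.2 fun A hA1 hA2 => ?_
  rw [mem_minF] at hA1 hA2
  exact hne (child_unique hchain hA1.2 hA2.2 (mem_childF.1 h1) (mem_childF.1 h2))


variable (hchain : ∀ x y z : S, x ≤ y → x ≤ z → y ≤ z ∨ z ≤ y)
  (p : S → ℕ) (hp : ∀ L : S, ¬ IsMin L → 2 ≤ p L)
  (hcard : ∀ L : S, ¬ IsMin L → (Finset.univ.filter (fun J : S => J ⋖ L)).card = p L)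
  (μ : S → ℝ) (hμ : ∀ L J : S, J ⋖ L → μ J = μ L / p L)

include hcard in
lemma childF_card {L : S} (hL : ¬ IsMin L) : (childF L).card = p L := hcard L hL

include hp in
lemma pL_ne_zero {L : S} (hL : ¬ IsMin L) : (p L : ℝ) ≠ 0 := by
  have := hp L hL; positivity

include hμ in
lemma mu_child {L c : S} (hc : c ∈ childF L) : μ c = μ L / p L := hμ L c (mem_childF.1 hc)

include hp hcard hμ in
lemma sum_mu_child {L : S} (hL : ¬ IsMin L) : ∑ c ∈ childF L, μ c = μ L := by
  rw [Finset.sum_congr rfl (fun c hc => mu_child p μ hμ hc), Finset.sum_const,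
    childF_card p hcard hL, nsmul_eq_mul]
  field_simp [pL_ne_zero p hp hL]

include hchain hp hcard hμ in
lemma sum_minF_mu : ∀ L : S, ∑ A ∈ minF L, μ A = μ L := by
  intro L
  induction L using WellFoundedLT.induction with
  | ind L ih =>
    by_cases hL : IsMin L
    · have : minF L = {L} := by
        ext A
        simp only [mem_minF, Finset.mem_singleton]
        exact ⟨fun ⟨hA, hAL⟩ => le_antisymm hAL (hL hAL),
          by rintro rfl; exact ⟨hL, le_rfl⟩⟩
      rw [this, Finset.sum_singleton]
    · rw [sum_minF_decomp hchain hL]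
      rw [Finset.sum_congr rfl (fun c hc => ih c (mem_childF.1 hc).lt)]
      exact sum_mu_child p hp hcard μ hμ hL

variable {α : Type*}
variable {α : Type*}

lemma sum2_eval (s : Finset α) (f : α → ℝ) :
    ∑ a ∈ s, ∑ b ∈ s, (if a ≠ b then f a * f b else 0)
      = (∑ a ∈ s, f a)^2 - ∑ a ∈ s, f a^2 := by
  have h1 : ∀ a ∈ s, ∑ b ∈ s, (if a ≠ b then f a * f b else 0)
      = f a * ∑ b ∈ s, f b - f a ^ 2 := by
    intro a ha
    have : ∀ b ∈ s, (if a ≠ b then f a * f b else 0)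
        = f a * f b - (if b = a then f a * f b else 0) := by
      intro b _
      by_cases h : b = a
      · simp [h]
      · rw [if_pos (fun h' : a = b => h h'.symm), if_neg h]; ring
    rw [Finset.sum_congr rfl this, Finset.sum_sub_distrib, Finset.sum_ite_eq' s a, if_pos ha,
      ← Finset.mul_sum]
    ring
  rw [Finset.sum_congr rfl h1, Finset.sum_sub_distrib, ← Finset.sum_mul]
  ring

lemma sum3_eval (s : Finset α) (f : α → ℝ) :
    ∑ a ∈ s, ∑ b ∈ s, ∑ c ∈ s, (if a ≠ b ∧ b ≠ c ∧ c ≠ a then f a * f b * f c else 0)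
      = (∑ a ∈ s, f a)^3 - 3 * (∑ a ∈ s, f a) * (∑ a ∈ s, f a^2) + 2 * ∑ a ∈ s, f a^3 := by
  set m := ∑ a ∈ s, f a with hm
  set q := ∑ a ∈ s, f a^2 with hq
  have h1 : ∀ a ∈ s, ∀ b ∈ s, a ≠ b →
      ∑ c ∈ s, (if b ≠ c ∧ c ≠ a then f a * f b * f c else 0)
        = f a * f b * (m - f a - f b) := by
    intro a ha b hb hab
    have : ∀ c ∈ s, (if b ≠ c ∧ c ≠ a then f a * f b * f c else 0)
        = f a * f b * f c - (if c = a then f a * f b * f c else 0)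
          - (if c = b then f a * f b * f c else 0) := by
      intro c _
      by_cases h1 : c = a
      · subst h1; simp [Ne.symm hab, hab]
      · by_cases h2 : c = b <;> simp [h1, h2, eq_comm, Ne.symm]
        · subst h2; simp [hab]
    rw [Finset.sum_congr rfl this, Finset.sum_sub_distrib, Finset.sum_sub_distrib,
      Finset.sum_ite_eq' s a, Finset.sum_ite_eq' s b, if_pos ha, if_pos hb, ← Finset.mul_sum]
    ring
  have h2 : ∀ a ∈ s, ∑ b ∈ s, ∑ c ∈ s, (if a ≠ b ∧ b ≠ c ∧ c ≠ a then f a * f b * f c else 0)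
      = f a * (m^2 - f a * m - q) - f a^2 * (m - 2 * f a) := by
    intro a ha
    have e1 : ∀ b ∈ s, ∑ c ∈ s, (if a ≠ b ∧ b ≠ c ∧ c ≠ a then f a * f b * f c else 0)
        = (if a ≠ b then f a * f b * (m - f a - f b) else 0) := by
      intro b hb
      by_cases h : a = b
      · simp [h]
      · rw [if_pos h, ← h1 a ha b hb h]
        exact Finset.sum_congr rfl fun c _ => by simp [h]
    rw [Finset.sum_congr rfl e1]
    have e2 : ∀ b ∈ s, (if a ≠ b then f a * f b * (m - f a - f b) else 0)
        = f a * f b * (m - f a - f b) - (if b = a then f a * f b * (m - f a - f b) else 0) := by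
      intro b _
      by_cases h : b = a
      · simp [h]
      · rw [if_pos (fun h' : a = b => h h'.symm), if_neg h]; ring
    rw [Finset.sum_congr rfl e2, Finset.sum_sub_distrib, Finset.sum_ite_eq' s a, if_pos ha]
    have : ∑ b ∈ s, f a * f b * (m - f a - f b)
        = f a * (m * m) - f a * (f a * m) - f a * q := by
      have : ∀ b ∈ s, f a * f b * (m - f a - f b)
          = f a * (m - f a) * f b - f a * f b ^ 2 := by intro b _; ring
      rw [Finset.sum_congr rfl this, Finset.sum_sub_distrib, ← Finset.mul_sum, ← Finset.mul_sum,
        ← hm, ← hq]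
      ring
    rw [this]; ring
  rw [Finset.sum_congr rfl h2, Finset.sum_sub_distrib]
  have e3 : ∑ a ∈ s, f a * (m^2 - f a * m - q)
      = m * m^2 - q * m - m * q := by
    have : ∀ a ∈ s, f a * (m^2 - f a * m - q) = (m^2 - q) * f a - m * f a ^ 2 := by
      intro a _; ring
    rw [Finset.sum_congr rfl this, Finset.sum_sub_distrib, ← Finset.mul_sum, ← Finset.mul_sum,
      ← hq, ← hm]
    ring
  have e4 : ∑ a ∈ s, f a^2 * (m - 2 * f a) = q * m - 2 * ∑ a ∈ s, f a ^ 3 := by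
    have : ∀ a ∈ s, f a^2 * (m - 2 * f a) = m * f a ^ 2 - 2 * f a ^ 3 := by
      intro a _; ring
    rw [Finset.sum_congr rfl this, Finset.sum_sub_distrib, ← Finset.mul_sum, ← Finset.mul_sum,
      ← hq]
    ring
  rw [e3, e4]; ring

lemma join_le_child {x y c L : S} (hc : c ⋖ L) (hx : x ≤ c) (hy : y ≤ c) :
    x ⊔ y ≠ L := fun h => absurd (h ▸ sup_le hx hy) hc.lt.not_ge

include hchain in
lemma join_child_iff {L c₁ c₂ A B : S} (hc₁ : c₁ ⋖ L) (hc₂ : c₂ ⋖ L)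
    (hA : A ≤ c₁) (hB : B ≤ c₂) : A ⊔ B = L ↔ c₁ ≠ c₂ := by
  constructor
  · rintro h rfl
    exact join_le_child hc₁ hA hB h
  · intro hne
    rw [join_eq_iff (hA.trans hc₁.lt.le) (hB.trans hc₂.lt.le)]
    intro c hc hAc hBc
    exact hne ((child_unique hchain hA hAc hc₁ hc).trans
      (child_unique hchain hB hBc hc₂ hc).symm)

lemma sum_min_restrict {L : S} (f : S → ℝ) (hf : ∀ A, IsMin A → ¬ A ≤ L → f A = 0) :
    ∑ A ∈ Finset.univ.filter (fun A : S => IsMin A), f A = ∑ A ∈ minF L, f A := by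
  symm
  refine Finset.sum_subset (fun A hA => ?_) (fun A hA hA' => ?_)
  · simp only [Finset.mem_filter, Finset.mem_univ, true_and]
    exact (mem_minF.1 hA).1
  · simp only [Finset.mem_filter, Finset.mem_univ, true_and] at hA
    exact hf A hA (fun h => hA' (mem_minF.2 ⟨hA, h⟩))

include hp hcard hμ in
lemma sum_mu_sq_child {L : S} (hL : ¬ IsMin L) :
    ∑ c ∈ childF L, μ c ^ 2 = μ L ^ 2 / p L := by
  rw [Finset.sum_congr rfl (fun c hc => by rw [mu_child p μ hμ hc]), Finset.sum_const,
    childF_card p hcard hL, nsmul_eq_mul]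
  field_simp [pL_ne_zero p hp hL]

include hp hcard hμ in
lemma sum_mu_cube_child {L : S} (hL : ¬ IsMin L) :
    ∑ c ∈ childF L, μ c ^ 3 = μ L ^ 3 / (p L ^ 2) := by
  rw [Finset.sum_congr rfl (fun c hc => by rw [mu_child p μ hμ hc]), Finset.sum_const,
    childF_card p hcard hL, nsmul_eq_mul]
  field_simp [pL_ne_zero p hp hL]

include hchain hp hcard hμ in
lemma W_lemma {L : S} (hL : ¬ IsMin L) :
    ∑ A ∈ Finset.univ.filter (fun A : S => IsMin A),
      ∑ B ∈ Finset.univ.filter (fun B : S => IsMin B),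
        (if A ⊔ B = L then μ A * μ B else 0)
      = μ L ^ 2 * (1 - (p L : ℝ)⁻¹) := by
  rw [sum_min_restrict (L := L) _ (fun A hA hAL => Finset.sum_eq_zero fun B hB => by
    rw [if_neg (fun h => hAL (le_sup_left.trans_eq h))])]
  rw [Finset.sum_congr rfl (fun A hA => sum_min_restrict (L := L) _
    (fun B hB hBL => by rw [if_neg (fun h => hBL (le_sup_right.trans_eq h))]))]
  rw [sum_minF_decomp hchain hL]
  rw [Finset.sum_congr rfl (fun c₁ hc₁ => Finset.sum_congr rfl (fun A hA =>
    sum_minF_decomp hchain hL _))]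
  have key : ∀ c₁ ∈ childF L, ∀ A ∈ minF c₁,
      ∑ c₂ ∈ childF L, ∑ B ∈ minF c₂, (if A ⊔ B = L then μ A * μ B else 0)
        = ∑ c₂ ∈ childF L, (if c₁ ≠ c₂ then μ A * μ c₂ else 0) := by
    intro c₁ hc₁ A hA
    refine Finset.sum_congr rfl fun c₂ hc₂ => ?_
    have : ∀ B ∈ minF c₂, (if A ⊔ B = L then μ A * μ B else 0)
        = (if c₁ ≠ c₂ then μ A * μ B else 0) := by
      intro B hB
      rw [if_congr (join_child_iff hchain (mem_childF.1 hc₁) (mem_childF.1 hc₂)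
        (mem_minF.1 hA).2 (mem_minF.1 hB).2) rfl rfl]
    rw [Finset.sum_congr rfl this]
    by_cases h : c₁ = c₂
    · simp [h]
    · rw [Finset.sum_congr rfl (fun B _ => if_pos h), ← Finset.mul_sum,
        sum_minF_mu hchain p hp hcard μ hμ c₂, if_pos h]
  rw [Finset.sum_congr rfl (fun c₁ hc₁ => Finset.sum_congr rfl (fun A hA => key c₁ hc₁ A hA))]
  have step : ∀ c₁ ∈ childF L,
      ∑ A ∈ minF c₁, ∑ c₂ ∈ childF L, (if c₁ ≠ c₂ then μ A * μ c₂ else 0)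
        = ∑ c₂ ∈ childF L, (if c₁ ≠ c₂ then μ c₁ * μ c₂ else 0) := by
    intro c₁ hc₁
    rw [Finset.sum_comm]
    refine Finset.sum_congr rfl fun c₂ hc₂ => ?_
    by_cases h : c₁ = c₂
    · simp [h]
    · rw [Finset.sum_congr rfl (fun A _ => if_pos h), ← Finset.sum_mul,
        sum_minF_mu hchain p hp hcard μ hμ c₁, if_pos h]
  rw [Finset.sum_congr rfl step, sum2_eval (childF L) μ,
    sum_mu_child p hp hcard μ hμ hL, sum_mu_sq_child p hp hcard μ hμ hL]
  field_simp [pL_ne_zero p hp hL]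

lemma notMin_join {A B : S} (hA : IsMin A) (hB : IsMin B) (hAB : A ≠ B) :
    ¬ IsMin (A ⊔ B) := by
  intro h
  have h1 : A ⊔ B ≤ A := h le_sup_left
  have h2 : B ≤ A := le_sup_right.trans h1
  exact hAB (le_antisymm (hA h2) h2)

lemma pull3 (s₁ s₂ s₃ : Finset S) (g : S → ℝ) (P : Prop) [Decidable P] :
    ∑ a ∈ s₁, ∑ b ∈ s₂, ∑ c ∈ s₃, (if P then g a * g b * g c else 0)
      = if P then (∑ a ∈ s₁, g a) * (∑ a ∈ s₂, g a) * (∑ a ∈ s₃, g a) else 0 := by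
  by_cases hP : P
  · rw [if_pos hP]
    have e1 : ((∑ a ∈ s₁, g a) * ∑ a ∈ s₂, g a) * ∑ a ∈ s₃, g a
        = ∑ a ∈ s₁, ∑ b ∈ s₂, ∑ c ∈ s₃, g a * g b * g c := by
      rw [Finset.sum_mul_sum, Finset.sum_mul]
      refine Finset.sum_congr rfl fun a _ => ?_
      rw [Finset.sum_mul]
      exact Finset.sum_congr rfl fun b _ => by rw [Finset.mul_sum]
    rw [Finset.sum_congr rfl (fun a _ => Finset.sum_congr rfl (fun b _ =>
      Finset.sum_congr rfl (fun c _ => if_pos hP))), e1]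
  · simp [hP]

include hchain hp hcard hμ in
lemma N3_lemma {L : S} (hL : ¬ IsMin L) :
    ∑ A ∈ Finset.univ.filter (fun A : S => IsMin A),
      ∑ B ∈ Finset.univ.filter (fun B : S => IsMin B),
        ∑ C ∈ Finset.univ.filter (fun C : S => IsMin C),
          (if A ⊔ B = L ∧ B ⊔ C = L ∧ C ⊔ A = L then μ A * μ B * μ C else 0)
      = μ L ^ 3 * (1 - (p L : ℝ)⁻¹) * (1 - 2 * (p L : ℝ)⁻¹) := by
  rw [sum_min_restrict (L := L) _ (fun A hA hAL => Finset.sum_eq_zero fun B hB =>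
    Finset.sum_eq_zero fun C hC => if_neg (fun h => hAL (le_sup_left.trans_eq h.1)))]
  rw [Finset.sum_congr rfl (fun A hA => sum_min_restrict (L := L) _
    (fun B hB hBL => Finset.sum_eq_zero fun C hC =>
      if_neg (fun h => hBL (le_sup_right.trans_eq h.1))))]
  rw [Finset.sum_congr rfl (fun A hA => Finset.sum_congr rfl (fun B hB =>
    sum_min_restrict (L := L) _
      (fun C hC hCL => if_neg (fun h => hCL (le_sup_left.trans_eq h.2.2)))))]
  rw [sum_minF_decomp hchain hL]
  rw [Finset.sum_congr rfl (fun c₁ _ => Finset.sum_congr rfl (fun A _ =>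
    sum_minF_decomp hchain hL _))]
  rw [Finset.sum_congr rfl (fun c₁ _ => Finset.sum_congr rfl (fun A _ =>
    Finset.sum_congr rfl (fun c₂ _ => Finset.sum_congr rfl (fun B _ =>
      sum_minF_decomp hchain hL _))))]
  have key : ∀ c₁ ∈ childF L, ∀ A ∈ minF c₁, ∀ c₂ ∈ childF L, ∀ B ∈ minF c₂,
      ∀ c₃ ∈ childF L, ∀ C ∈ minF c₃,
      (if A ⊔ B = L ∧ B ⊔ C = L ∧ C ⊔ A = L then μ A * μ B * μ C else 0)
        = (if c₁ ≠ c₂ ∧ c₂ ≠ c₃ ∧ c₃ ≠ c₁ then μ A * μ B * μ C else 0) := by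
    intro c₁ hc₁ A hA c₂ hc₂ B hB c₃ hc₃ C hC
    refine if_congr ?_ rfl rfl
    exact and_congr (join_child_iff hchain (mem_childF.1 hc₁) (mem_childF.1 hc₂)
        (mem_minF.1 hA).2 (mem_minF.1 hB).2)
      (and_congr (join_child_iff hchain (mem_childF.1 hc₂) (mem_childF.1 hc₃)
        (mem_minF.1 hB).2 (mem_minF.1 hC).2)
      (join_child_iff hchain (mem_childF.1 hc₃) (mem_childF.1 hc₁)
        (mem_minF.1 hC).2 (mem_minF.1 hA).2))
  rw [Finset.sum_congr rfl (fun c₁ hc₁ => Finset.sum_congr rfl (fun A hA =>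
    Finset.sum_congr rfl (fun c₂ hc₂ => Finset.sum_congr rfl (fun B hB =>
      Finset.sum_congr rfl (fun c₃ hc₃ => Finset.sum_congr rfl (fun C hC =>
        key c₁ hc₁ A hA c₂ hc₂ B hB c₃ hc₃ C hC))))))]
  have reorder : ∀ c₁ ∈ childF L,
      ∑ A ∈ minF c₁, ∑ c₂ ∈ childF L, ∑ B ∈ minF c₂, ∑ c₃ ∈ childF L, ∑ C ∈ minF c₃,
        (if c₁ ≠ c₂ ∧ c₂ ≠ c₃ ∧ c₃ ≠ c₁ then μ A * μ B * μ C else 0)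
      = ∑ c₂ ∈ childF L, ∑ c₃ ∈ childF L,
          ∑ A ∈ minF c₁, ∑ B ∈ minF c₂, ∑ C ∈ minF c₃,
            (if c₁ ≠ c₂ ∧ c₂ ≠ c₃ ∧ c₃ ≠ c₁ then μ A * μ B * μ C else 0) := by
    intro c₁ _
    rw [Finset.sum_comm]
    refine Finset.sum_congr rfl fun c₂ _ => ?_
    rw [Finset.sum_congr rfl (fun A _ => Finset.sum_comm)]
    exact Finset.sum_comm
  rw [Finset.sum_congr rfl reorder]
  have inner : ∀ c₁ ∈ childF L, ∀ c₂ ∈ childF L, ∀ c₃ ∈ childF L,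
      ∑ A ∈ minF c₁, ∑ B ∈ minF c₂, ∑ C ∈ minF c₃,
        (if c₁ ≠ c₂ ∧ c₂ ≠ c₃ ∧ c₃ ≠ c₁ then μ A * μ B * μ C else 0)
      = (if c₁ ≠ c₂ ∧ c₂ ≠ c₃ ∧ c₃ ≠ c₁ then μ c₁ * μ c₂ * μ c₃ else 0) := by
    intro c₁ _ c₂ _ c₃ _
    rw [pull3, sum_minF_mu hchain p hp hcard μ hμ, sum_minF_mu hchain p hp hcard μ hμ,
      sum_minF_mu hchain p hp hcard μ hμ]
  rw [Finset.sum_congr rfl (fun c₁ hc₁ => Finset.sum_congr rfl (fun c₂ hc₂ =>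
    Finset.sum_congr rfl (fun c₃ hc₃ => inner c₁ hc₁ c₂ hc₂ c₃ hc₃)))]
  rw [sum3_eval (childF L) μ, sum_mu_child p hp hcard μ hμ hL,
    sum_mu_sq_child p hp hcard μ hμ hL, sum_mu_cube_child p hp hcard μ hμ hL]
  field_simp [pL_ne_zero p hp hL]
  ring

include hchain hp hcard hμ in
lemma csum_lemma (M : S) (g : S → ℝ) :
    ∑ C ∈ Finset.univ.filter (fun C : S => IsMin C ∧ ¬ C ≤ M), μ C * g (C ⊔ M)
      = ∑ L ∈ Finset.univ.filter (fun L : S => ¬ IsMin L),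
          (if M < L then μ L * (1 - (p L : ℝ)⁻¹) * g L else 0) := by
  have hmap : ∀ C ∈ Finset.univ.filter (fun C : S => IsMin C ∧ ¬ C ≤ M),
      C ⊔ M ∈ Finset.univ.filter (fun L : S => ¬ IsMin L) := by
    intro C hC
    simp only [Finset.mem_filter, Finset.mem_univ, true_and] at hC ⊢
    have hlt : M < C ⊔ M := lt_of_le_of_ne le_sup_right
      (fun h => hC.2 (le_sup_left.trans h.ge))
    exact not_isMin_of_lt hlt
  rw [← Finset.sum_fiberwise_of_maps_to hmap (fun C => μ C * g (C ⊔ M))]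
  refine Finset.sum_congr rfl fun L hL => ?_
  have hLn : ¬ IsMin L := by
    simpa only [Finset.mem_filter, Finset.mem_univ, true_and] using hL
  by_cases hML : M < L
  · rw [if_pos hML]
    obtain ⟨c, hMc, hc⟩ := exists_child hML
    rw [Finset.sum_congr rfl (fun C hC => by
      rw [(Finset.mem_filter.1 hC).2])]
    have hfib : (Finset.univ.filter (fun C : S => IsMin C ∧ ¬ C ≤ M)).filter
        (fun C => C ⊔ M = L) = (minF L).filter (fun C => ¬ C ≤ c) := by
      ext C
      simp only [Finset.mem_filter, Finset.mem_univ, true_and, mem_minF]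
      constructor
      · rintro ⟨⟨hCmin, hCM⟩, hjoin⟩
        exact ⟨⟨hCmin, le_sup_left.trans_eq hjoin⟩,
          fun hCc => absurd hjoin (join_le_child hc hCc hMc)⟩
      · rintro ⟨⟨hCmin, hCL⟩, hCc⟩
        have hjoin : C ⊔ M = L := by
          rw [join_eq_iff hCL hML.le]
          intro c' hc' hCc' hMc'
          exact hCc ((child_unique hchain hMc' hMc hc' hc) ▸ hCc')
        exact ⟨⟨hCmin, fun hCM => hCc (hCM.trans hMc)⟩, hjoin⟩
    rw [hfib, ← Finset.sum_mul]
    have hsplit := Finset.sum_filter_add_sum_filter_not (minF L) (fun C => C ≤ c) μ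
    have h3 : (minF L).filter (fun C => C ≤ c) = minF c := by
      ext C
      simp only [Finset.mem_filter, mem_minF]
      exact ⟨fun ⟨⟨h1, _⟩, h3⟩ => ⟨h1, h3⟩, fun ⟨h1, h3⟩ => ⟨⟨h1, h3.trans hc.lt.le⟩, h3⟩⟩
    rw [h3, sum_minF_mu hchain p hp hcard μ hμ, sum_minF_mu hchain p hp hcard μ hμ] at hsplit
    have h4 : ∑ C ∈ (minF L).filter (fun C => ¬ C ≤ c), μ C = μ L - μ c := by linarith
    rw [h4, hμ L c hc, div_eq_mul_inv]
    ring
  · rw [if_neg hML]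
    rw [Finset.filter_filter]
    rw [Finset.filter_false_of_mem, Finset.sum_empty]
    rintro C _ ⟨⟨hCmin, hCM⟩, hjoin⟩
    exact hML (lt_of_le_of_ne (le_sup_right.trans_eq hjoin)
      (fun h => hCM (le_sup_left.trans_eq (hjoin.trans h.symm))))

include hchain hp hcard hμ in
lemma pair_lemma (g : S → ℝ) :
    ∑ A ∈ Finset.univ.filter (fun A : S => IsMin A),
      ∑ B ∈ Finset.univ.filter (fun B : S => IsMin B),
        (if A ≠ B then μ A * μ B * g (A ⊔ B) else 0)
      = ∑ L ∈ Finset.univ.filter (fun L : S => ¬ IsMin L),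
          μ L ^ 2 * (1 - (p L : ℝ)⁻¹) * g L := by
  have h1 : ∀ A ∈ Finset.univ.filter (fun A : S => IsMin A),
      ∀ B ∈ Finset.univ.filter (fun B : S => IsMin B),
      (if A ≠ B then μ A * μ B * g (A ⊔ B) else 0)
        = ∑ L ∈ Finset.univ.filter (fun L : S => ¬ IsMin L),
            (if A ⊔ B = L then μ A * μ B else 0) * g L := by
    intro A hA B hB
    simp only [Finset.mem_filter, Finset.mem_univ, true_and] at hA hB
    by_cases h : A = B
    · subst h
      rw [if_neg (fun h' => h' rfl)]
      symm
      refine Finset.sum_eq_zero fun L hL => ?_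
      rw [if_neg, zero_mul]
      intro hJ
      rw [sup_idem] at hJ
      exact (Finset.mem_filter.1 hL).2 (hJ ▸ hA)
    · rw [if_pos h]
      have hnm : ¬ IsMin (A ⊔ B) := notMin_join hA hB h
      have e : ∀ L ∈ Finset.univ.filter (fun L : S => ¬ IsMin L),
          (if A ⊔ B = L then μ A * μ B else 0) * g L
            = (if L = A ⊔ B then μ A * μ B * g (A ⊔ B) else 0) := by
        intro L hL
        by_cases hJ : A ⊔ B = L
        · subst hJ
          rw [if_pos rfl, if_pos rfl]
        · rw [if_neg hJ, zero_mul, if_neg (fun h' => hJ h'.symm)]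
      rw [Finset.sum_congr rfl e, Finset.sum_ite_eq' _ (A ⊔ B) (fun _ => μ A * μ B * g (A ⊔ B))]
      exact (if_pos (show A ⊔ B ∈ Finset.univ.filter (fun L : S => ¬ IsMin L) from
        Finset.mem_filter.2 ⟨Finset.mem_univ _, hnm⟩)).symm
  rw [Finset.sum_congr rfl (fun A hA => Finset.sum_congr rfl (fun B hB => h1 A hA B hB))]
  rw [Finset.sum_congr rfl (fun A _ => Finset.sum_comm), Finset.sum_comm]
  refine Finset.sum_congr rfl fun L hL => ?_
  have hLn : ¬ IsMin L := by
    simpa only [Finset.mem_filter, Finset.mem_univ, true_and] using hL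
  rw [Finset.sum_congr rfl (fun A _ => (Finset.sum_mul _ _ _).symm), ← Finset.sum_mul,
    W_lemma hchain p hp hcard μ hμ hLn]

include hchain in
lemma deep {a b c : S} (h : ¬ c ≤ a ⊔ b) :
    b ⊔ c = c ⊔ (a ⊔ b) ∧ c ⊔ a = c ⊔ (a ⊔ b) := by
  constructor
  · rcases hchain b (b ⊔ c) (a ⊔ b) le_sup_left le_sup_right with h1 | h1
    · exact absurd (le_sup_right.trans h1) h
    · exact le_antisymm (sup_le (le_sup_right.trans le_sup_right) le_sup_left)
        (sup_le le_sup_right h1)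
  · rcases hchain a (c ⊔ a) (a ⊔ b) le_sup_right le_sup_left with h1 | h1
    · exact absurd (le_sup_left.trans h1) h
    · exact le_antisymm (sup_le le_sup_left (le_sup_left.trans le_sup_right))
        (sup_le le_sup_left h1)

include hchain in
lemma split_point {A B C : S} {F : ℝ} :
    (if A ≠ B then (if B ≠ C ∧ C ≠ A then F else 0) else 0)
      = (if A ≠ B ∧ B ≠ C ∧ C ≠ A ∧ A ⊔ B = B ⊔ C ∧ B ⊔ C = C ⊔ A then F else 0)
        + (if A ≠ B ∧ ¬ C ≤ A ⊔ B then F else 0)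
        + (if B ≠ C ∧ ¬ A ≤ B ⊔ C then F else 0)
        + (if C ≠ A ∧ ¬ B ≤ C ⊔ A then F else 0) := by
  by_cases hAB : A = B
  · subst hAB
    rw [if_neg (fun h : A ≠ A => h rfl), if_neg (fun h : A ≠ A ∧ _ => h.1 rfl),
      if_neg (fun h : A ≠ C ∧ ¬ A ≤ A ⊔ C => h.2 le_sup_left),
      if_neg (fun h : C ≠ A ∧ ¬ A ≤ C ⊔ A => h.2 le_sup_right)]
    norm_num
  by_cases hBC : B = C
  · subst hBC
    rw [show (if B ≠ B ∧ B ≠ A then F else 0) = 0 from if_neg (fun h => h.1 rfl), ite_self,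
      if_neg (fun h : A ≠ B ∧ B ≠ B ∧ _ => h.2.1 rfl),
      if_neg (fun h : A ≠ B ∧ ¬ B ≤ A ⊔ B => h.2 le_sup_right),
      if_neg (fun h : B ≠ B ∧ _ => h.1 rfl),
      if_neg (fun h : B ≠ A ∧ ¬ B ≤ B ⊔ A => h.2 le_sup_left)]
    norm_num
  by_cases hCA : C = A
  · subst hCA
    rw [show (if B ≠ C ∧ C ≠ C then F else 0) = 0 from if_neg (fun h => h.2 rfl), ite_self,
      if_neg (fun h : C ≠ B ∧ B ≠ C ∧ C ≠ C ∧ _ => h.2.2.1 rfl),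
      if_neg (fun h : C ≠ B ∧ ¬ C ≤ C ⊔ B => h.2 le_sup_left),
      if_neg (fun h : B ≠ C ∧ ¬ C ≤ B ⊔ C => h.2 le_sup_right),
      if_neg (fun h : C ≠ C ∧ _ => h.1 rfl)]
    norm_num
  rw [if_pos hAB, if_pos ⟨hBC, hCA⟩]
  by_cases hC : C ≤ A ⊔ B
  · by_cases hA : A ≤ B ⊔ C
    · by_cases hB : B ≤ C ⊔ A
      · have hxy : A ⊔ B = B ⊔ C := le_antisymm (sup_le hA le_sup_left)
          (sup_le le_sup_right hC)
        have hyz : B ⊔ C = C ⊔ A := le_antisymm (sup_le hB le_sup_left)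
          (sup_le le_sup_right hA)
        rw [if_pos ⟨hAB, hBC, hCA, hxy, hyz⟩,
          if_neg (fun h : A ≠ B ∧ ¬ C ≤ A ⊔ B => h.2 hC),
          if_neg (fun h : B ≠ C ∧ ¬ A ≤ B ⊔ C => h.2 hA),
          if_neg (fun h : C ≠ A ∧ ¬ B ≤ C ⊔ A => h.2 hB)]
        norm_num
      · obtain ⟨hx, hy⟩ := deep hchain hB
        rw [if_pos (⟨hCA, hB⟩ : C ≠ A ∧ ¬ B ≤ C ⊔ A),
          if_neg (fun h : A ≠ B ∧ B ≠ C ∧ C ≠ A ∧ A ⊔ B = B ⊔ C ∧ B ⊔ C = C ⊔ A =>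
            hB (le_sup_left.trans h.2.2.2.2.le)),
          if_neg (fun h : A ≠ B ∧ ¬ C ≤ A ⊔ B => h.2 hC),
          if_neg (fun h : B ≠ C ∧ ¬ A ≤ B ⊔ C => h.2 hA)]
        norm_num
    · obtain ⟨hz, hx⟩ := deep hchain hA
      rw [if_pos (⟨hBC, hA⟩ : B ≠ C ∧ ¬ A ≤ B ⊔ C),
        if_neg (fun h : A ≠ B ∧ B ≠ C ∧ C ≠ A ∧ A ⊔ B = B ⊔ C ∧ B ⊔ C = C ⊔ A =>
          hA (le_sup_right.trans h.2.2.2.2.ge)),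
        if_neg (fun h : A ≠ B ∧ ¬ C ≤ A ⊔ B => h.2 hC),
        if_neg (fun h : C ≠ A ∧ ¬ B ≤ C ⊔ A =>
          h.2 ((le_sup_left.trans le_sup_right).trans_eq hz.symm))]
      norm_num
  · obtain ⟨hy, hz⟩ := deep hchain hC
    rw [if_pos (⟨hAB, hC⟩ : A ≠ B ∧ ¬ C ≤ A ⊔ B),
      if_neg (fun h : A ≠ B ∧ B ≠ C ∧ C ≠ A ∧ A ⊔ B = B ⊔ C ∧ B ⊔ C = C ⊔ A =>
        hC (le_sup_right.trans h.2.2.2.1.ge)),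
      if_neg (fun h : B ≠ C ∧ ¬ A ≤ B ⊔ C =>
        h.2 ((le_sup_left.trans le_sup_right).trans_eq hy.symm)),
      if_neg (fun h : C ≠ A ∧ ¬ B ≤ C ⊔ A =>
        h.2 ((le_sup_right.trans le_sup_right).trans_eq hz.symm))]
    norm_num

lemma ite_mul_zero {P : Prop} [Decidable P] {k v : ℝ} :
    (if P then k * v else 0) = k * (if P then v else 0) := by
  split <;> simp

include hchain hp hcard hμ in
lemma piece0 (T₁ T₂ T₃ : S → ℝ) :
    ∑ A ∈ Finset.univ.filter (fun A : S => IsMin A),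
      ∑ B ∈ Finset.univ.filter (fun B : S => IsMin B),
        ∑ C ∈ Finset.univ.filter (fun C : S => IsMin C),
          (if A ≠ B ∧ B ≠ C ∧ C ≠ A ∧ A ⊔ B = B ⊔ C ∧ B ⊔ C = C ⊔ A then
            μ A * μ B * μ C * T₁ (A ⊔ B) * T₂ (B ⊔ C) * T₃ (C ⊔ A) else 0)
      = ∑ L ∈ Finset.univ.filter (fun L : S => ¬ IsMin L),
          μ L ^ 3 * (1 - (p L : ℝ)⁻¹) * (1 - 2 * (p L : ℝ)⁻¹) * (T₁ L * T₂ L * T₃ L) := by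
  have key : ∀ A ∈ Finset.univ.filter (fun A : S => IsMin A),
      ∀ B ∈ Finset.univ.filter (fun B : S => IsMin B),
      ∀ C ∈ Finset.univ.filter (fun C : S => IsMin C),
      (if A ≠ B ∧ B ≠ C ∧ C ≠ A ∧ A ⊔ B = B ⊔ C ∧ B ⊔ C = C ⊔ A then
          μ A * μ B * μ C * T₁ (A ⊔ B) * T₂ (B ⊔ C) * T₃ (C ⊔ A) else 0)
        = ∑ L ∈ Finset.univ.filter (fun L : S => ¬ IsMin L),
            (if A ⊔ B = L ∧ B ⊔ C = L ∧ C ⊔ A = L then μ A * μ B * μ C else 0)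
              * (T₁ L * T₂ L * T₃ L) := by
    intro A hA B hB C hC
    simp only [Finset.mem_filter, Finset.mem_univ, true_and] at hA hB hC
    by_cases hcond : A ≠ B ∧ B ≠ C ∧ C ≠ A ∧ A ⊔ B = B ⊔ C ∧ B ⊔ C = C ⊔ A
    · obtain ⟨h1, h2, h3, h4, h5⟩ := hcond
      rw [if_pos ⟨h1, h2, h3, h4, h5⟩]
      have hnm : ¬ IsMin (A ⊔ B) := notMin_join hA hB h1
      have e : ∀ L ∈ Finset.univ.filter (fun L : S => ¬ IsMin L),
          (if A ⊔ B = L ∧ B ⊔ C = L ∧ C ⊔ A = L then μ A * μ B * μ C else 0)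
              * (T₁ L * T₂ L * T₃ L)
            = (if L = A ⊔ B then
                μ A * μ B * μ C * T₁ (A ⊔ B) * T₂ (B ⊔ C) * T₃ (C ⊔ A) else 0) := by
        intro L hL
        by_cases hJ : L = A ⊔ B
        · subst hJ
          rw [if_pos ⟨rfl, h4.symm, (h4.trans h5).symm⟩, if_pos rfl, ← h4,
            ← (h4.trans h5)]
          ring
        · rw [if_neg (fun h' => hJ h'.1.symm), zero_mul, if_neg hJ]
      rw [Finset.sum_congr rfl e, Finset.sum_ite_eq' _ (A ⊔ B)
        (fun _ => μ A * μ B * μ C * T₁ (A ⊔ B) * T₂ (B ⊔ C) * T₃ (C ⊔ A))]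
      exact (if_pos (show A ⊔ B ∈ Finset.univ.filter (fun L : S => ¬ IsMin L) from
        Finset.mem_filter.2 ⟨Finset.mem_univ _, hnm⟩)).symm
    · rw [if_neg hcond]
      symm
      refine Finset.sum_eq_zero fun L hL => ?_
      have hLn : ¬ IsMin L := by
        simpa only [Finset.mem_filter, Finset.mem_univ, true_and] using hL
      rw [if_neg, zero_mul]
      rintro ⟨hx, hy, hz⟩
      refine hcond ⟨?_, ?_, ?_, hx.trans hy.symm, hy.trans hz.symm⟩
      · intro h'; subst h'; rw [sup_idem] at hx; exact hLn (hx ▸ hA)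
      · intro h'; subst h'; rw [sup_idem] at hy; exact hLn (hy ▸ hB)
      · intro h'; subst h'; rw [sup_idem] at hz; exact hLn (hz ▸ hC)
  rw [Finset.sum_congr rfl (fun A hA => Finset.sum_congr rfl (fun B hB =>
    Finset.sum_congr rfl (fun C hC => key A hA B hB C hC)))]
  rw [Finset.sum_congr rfl (fun A _ => Finset.sum_congr rfl (fun B _ => Finset.sum_comm))]
  rw [Finset.sum_congr rfl (fun A _ => Finset.sum_comm)]
  rw [Finset.sum_comm]
  refine Finset.sum_congr rfl fun L hL => ?_
  have hLn : ¬ IsMin L := by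
    simpa only [Finset.mem_filter, Finset.mem_univ, true_and] using hL
  rw [Finset.sum_congr rfl (fun A _ => Finset.sum_congr rfl
      (fun B _ => (Finset.sum_mul _ _ _).symm)),
    Finset.sum_congr rfl (fun A _ => (Finset.sum_mul _ _ _).symm), ← Finset.sum_mul,
    N3_lemma hchain p hp hcard μ hμ hLn]

include hchain hp hcard hμ in
lemma pieceA (T₁ T₂ T₃ : S → ℝ) :
    ∑ A ∈ Finset.univ.filter (fun A : S => IsMin A),
      ∑ B ∈ Finset.univ.filter (fun B : S => IsMin B),
        ∑ C ∈ Finset.univ.filter (fun C : S => IsMin C),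
          (if A ≠ B ∧ ¬ C ≤ A ⊔ B then
            μ A * μ B * μ C * T₁ (A ⊔ B) * T₂ (B ⊔ C) * T₃ (C ⊔ A) else 0)
      = ∑ M ∈ Finset.univ.filter (fun M : S => ¬ IsMin M),
          μ M ^ 2 * (1 - (p M : ℝ)⁻¹) *
            (T₁ M * ∑ L ∈ Finset.univ.filter (fun L : S => ¬ IsMin L),
              (if M < L then μ L * (1 - (p L : ℝ)⁻¹) * (T₂ L * T₃ L) else 0)) := by
  have inner : ∀ A B : S, A ≠ B →
      ∑ C ∈ Finset.univ.filter (fun C : S => IsMin C),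
        (if A ≠ B ∧ ¬ C ≤ A ⊔ B then
          μ A * μ B * μ C * T₁ (A ⊔ B) * T₂ (B ⊔ C) * T₃ (C ⊔ A) else 0)
      = μ A * μ B * (T₁ (A ⊔ B) *
          ∑ L ∈ Finset.univ.filter (fun L : S => ¬ IsMin L),
            (if (A ⊔ B) < L then μ L * (1 - (p L : ℝ)⁻¹) * (T₂ L * T₃ L) else 0)) := by
    intro A B hAB
    have e : ∀ C ∈ Finset.univ.filter (fun C : S => IsMin C),
        (if A ≠ B ∧ ¬ C ≤ A ⊔ B then
          μ A * μ B * μ C * T₁ (A ⊔ B) * T₂ (B ⊔ C) * T₃ (C ⊔ A) else 0)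
        = μ A * μ B * T₁ (A ⊔ B) *
            (if ¬ C ≤ A ⊔ B then μ C * (T₂ (C ⊔ (A ⊔ B)) * T₃ (C ⊔ (A ⊔ B))) else 0) := by
      intro C _
      by_cases hc : C ≤ A ⊔ B
      · rw [if_neg (fun h => h.2 hc), if_neg (fun h => h hc), mul_zero]
      · obtain ⟨hy, hz⟩ := deep hchain hc
        rw [if_pos ⟨hAB, hc⟩, if_pos hc, hy, hz]
        ring
    rw [Finset.sum_congr rfl e, ← Finset.mul_sum]
    have e2 : ∑ C ∈ Finset.univ.filter (fun C : S => IsMin C),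
        (if ¬ C ≤ A ⊔ B then μ C * (T₂ (C ⊔ (A ⊔ B)) * T₃ (C ⊔ (A ⊔ B))) else 0)
        = ∑ C ∈ Finset.univ.filter (fun C : S => IsMin C ∧ ¬ C ≤ A ⊔ B),
            μ C * (T₂ (C ⊔ (A ⊔ B)) * T₃ (C ⊔ (A ⊔ B))) := by
      rw [← Finset.sum_filter, Finset.filter_filter]
    rw [e2, csum_lemma hchain p hp hcard μ hμ (A ⊔ B) (fun L => T₂ L * T₃ L), mul_assoc]
  have outer : ∀ A ∈ Finset.univ.filter (fun A : S => IsMin A),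
      ∀ B ∈ Finset.univ.filter (fun B : S => IsMin B),
      ∑ C ∈ Finset.univ.filter (fun C : S => IsMin C),
        (if A ≠ B ∧ ¬ C ≤ A ⊔ B then
          μ A * μ B * μ C * T₁ (A ⊔ B) * T₂ (B ⊔ C) * T₃ (C ⊔ A) else 0)
      = (if A ≠ B then μ A * μ B *
          ((fun M => T₁ M * ∑ L ∈ Finset.univ.filter (fun L : S => ¬ IsMin L),
            (if M < L then μ L * (1 - (p L : ℝ)⁻¹) * (T₂ L * T₃ L) else 0)) (A ⊔ B))
          else 0) := by
    intro A _ B _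
    by_cases h : A = B
    · rw [if_neg (fun h' => h' h)]
      exact Finset.sum_eq_zero fun C _ => if_neg (fun h' => h'.1 h)
    · rw [if_pos h, inner A B h]
  rw [Finset.sum_congr rfl (fun A hA => Finset.sum_congr rfl
    (fun B hB => outer A hA B hB))]
  exact pair_lemma hchain p hp hcard μ hμ
    (fun M => T₁ M * ∑ L ∈ Finset.univ.filter (fun L : S => ¬ IsMin L),
      (if M < L then μ L * (1 - (p L : ℝ)⁻¹) * (T₂ L * T₃ L) else 0))

include hchain hp hcard hμ in
lemma pieceB (T₁ T₂ T₃ : S → ℝ) :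
    ∑ A ∈ Finset.univ.filter (fun A : S => IsMin A),
      ∑ B ∈ Finset.univ.filter (fun B : S => IsMin B),
        ∑ C ∈ Finset.univ.filter (fun C : S => IsMin C),
          (if B ≠ C ∧ ¬ A ≤ B ⊔ C then
            μ A * μ B * μ C * T₁ (A ⊔ B) * T₂ (B ⊔ C) * T₃ (C ⊔ A) else 0)
      = ∑ M ∈ Finset.univ.filter (fun M : S => ¬ IsMin M),
          μ M ^ 2 * (1 - (p M : ℝ)⁻¹) *
            (T₂ M * ∑ L ∈ Finset.univ.filter (fun L : S => ¬ IsMin L),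
              (if M < L then μ L * (1 - (p L : ℝ)⁻¹) * (T₁ L * T₃ L) else 0)) := by
  rw [Finset.sum_comm]
  rw [Finset.sum_congr rfl (fun B _ => Finset.sum_comm)]
  have inner : ∀ B C : S, B ≠ C →
      ∑ A ∈ Finset.univ.filter (fun A : S => IsMin A),
        (if B ≠ C ∧ ¬ A ≤ B ⊔ C then
          μ A * μ B * μ C * T₁ (A ⊔ B) * T₂ (B ⊔ C) * T₃ (C ⊔ A) else 0)
      = μ B * μ C * (T₂ (B ⊔ C) *
          ∑ L ∈ Finset.univ.filter (fun L : S => ¬ IsMin L),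
            (if (B ⊔ C) < L then μ L * (1 - (p L : ℝ)⁻¹) * (T₁ L * T₃ L) else 0)) := by
    intro B C hBC
    have e : ∀ A ∈ Finset.univ.filter (fun A : S => IsMin A),
        (if B ≠ C ∧ ¬ A ≤ B ⊔ C then
          μ A * μ B * μ C * T₁ (A ⊔ B) * T₂ (B ⊔ C) * T₃ (C ⊔ A) else 0)
        = μ B * μ C * T₂ (B ⊔ C) *
            (if ¬ A ≤ B ⊔ C then μ A * (T₁ (A ⊔ (B ⊔ C)) * T₃ (A ⊔ (B ⊔ C))) else 0) := by
      intro A _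
      by_cases ha : A ≤ B ⊔ C
      · rw [if_neg (fun h => h.2 ha), if_neg (fun h => h ha), mul_zero]
      · obtain ⟨hz, hx⟩ := deep hchain ha
        rw [if_pos ⟨hBC, ha⟩, if_pos ha, hz, hx]
        ring
    rw [Finset.sum_congr rfl e, ← Finset.mul_sum]
    have e2 : ∑ A ∈ Finset.univ.filter (fun A : S => IsMin A),
        (if ¬ A ≤ B ⊔ C then μ A * (T₁ (A ⊔ (B ⊔ C)) * T₃ (A ⊔ (B ⊔ C))) else 0)
        = ∑ A ∈ Finset.univ.filter (fun A : S => IsMin A ∧ ¬ A ≤ B ⊔ C),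
            μ A * (T₁ (A ⊔ (B ⊔ C)) * T₃ (A ⊔ (B ⊔ C))) := by
      rw [← Finset.sum_filter, Finset.filter_filter]
    rw [e2, csum_lemma hchain p hp hcard μ hμ (B ⊔ C) (fun L => T₁ L * T₃ L), mul_assoc]
  have outer : ∀ B ∈ Finset.univ.filter (fun B : S => IsMin B),
      ∀ C ∈ Finset.univ.filter (fun C : S => IsMin C),
      ∑ A ∈ Finset.univ.filter (fun A : S => IsMin A),
        (if B ≠ C ∧ ¬ A ≤ B ⊔ C then
          μ A * μ B * μ C * T₁ (A ⊔ B) * T₂ (B ⊔ C) * T₃ (C ⊔ A) else 0)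
      = (if B ≠ C then μ B * μ C *
          ((fun M => T₂ M * ∑ L ∈ Finset.univ.filter (fun L : S => ¬ IsMin L),
            (if M < L then μ L * (1 - (p L : ℝ)⁻¹) * (T₁ L * T₃ L) else 0)) (B ⊔ C))
          else 0) := by
    intro B _ C _
    by_cases h : B = C
    · rw [if_neg (fun h' => h' h)]
      exact Finset.sum_eq_zero fun A _ => if_neg (fun h' => h'.1 h)
    · rw [if_pos h, inner B C h]
  rw [Finset.sum_congr rfl (fun B hB => Finset.sum_congr rfl
    (fun C hC => outer B hB C hC))]
  exact pair_lemma hchain p hp hcard μ hμ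
    (fun M => T₂ M * ∑ L ∈ Finset.univ.filter (fun L : S => ¬ IsMin L),
      (if M < L then μ L * (1 - (p L : ℝ)⁻¹) * (T₁ L * T₃ L) else 0))

include hchain hp hcard hμ in
lemma pieceC (T₁ T₂ T₃ : S → ℝ) :
    ∑ A ∈ Finset.univ.filter (fun A : S => IsMin A),
      ∑ B ∈ Finset.univ.filter (fun B : S => IsMin B),
        ∑ C ∈ Finset.univ.filter (fun C : S => IsMin C),
          (if C ≠ A ∧ ¬ B ≤ C ⊔ A then
            μ A * μ B * μ C * T₁ (A ⊔ B) * T₂ (B ⊔ C) * T₃ (C ⊔ A) else 0)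
      = ∑ M ∈ Finset.univ.filter (fun M : S => ¬ IsMin M),
          μ M ^ 2 * (1 - (p M : ℝ)⁻¹) *
            (T₃ M * ∑ L ∈ Finset.univ.filter (fun L : S => ¬ IsMin L),
              (if M < L then μ L * (1 - (p L : ℝ)⁻¹) * (T₁ L * T₂ L) else 0)) := by
  rw [Finset.sum_congr rfl (fun A _ => Finset.sum_comm), Finset.sum_comm]
  have inner : ∀ C A : S, C ≠ A →
      ∑ B ∈ Finset.univ.filter (fun B : S => IsMin B),
        (if C ≠ A ∧ ¬ B ≤ C ⊔ A then
          μ A * μ B * μ C * T₁ (A ⊔ B) * T₂ (B ⊔ C) * T₃ (C ⊔ A) else 0)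
      = μ C * μ A * (T₃ (C ⊔ A) *
          ∑ L ∈ Finset.univ.filter (fun L : S => ¬ IsMin L),
            (if (C ⊔ A) < L then μ L * (1 - (p L : ℝ)⁻¹) * (T₁ L * T₂ L) else 0)) := by
    intro C A hCA
    have e : ∀ B ∈ Finset.univ.filter (fun B : S => IsMin B),
        (if C ≠ A ∧ ¬ B ≤ C ⊔ A then
          μ A * μ B * μ C * T₁ (A ⊔ B) * T₂ (B ⊔ C) * T₃ (C ⊔ A) else 0)
        = μ C * μ A * T₃ (C ⊔ A) *
            (if ¬ B ≤ C ⊔ A then μ B * (T₁ (B ⊔ (C ⊔ A)) * T₂ (B ⊔ (C ⊔ A))) else 0) := by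
      intro B _
      by_cases hb : B ≤ C ⊔ A
      · rw [if_neg (fun h => h.2 hb), if_neg (fun h => h hb), mul_zero]
      · obtain ⟨hx, hy⟩ := deep hchain hb
        rw [if_pos ⟨hCA, hb⟩, if_pos hb, hx, hy]
        ring
    rw [Finset.sum_congr rfl e, ← Finset.mul_sum]
    have e2 : ∑ B ∈ Finset.univ.filter (fun B : S => IsMin B),
        (if ¬ B ≤ C ⊔ A then μ B * (T₁ (B ⊔ (C ⊔ A)) * T₂ (B ⊔ (C ⊔ A))) else 0)
        = ∑ B ∈ Finset.univ.filter (fun B : S => IsMin B ∧ ¬ B ≤ C ⊔ A),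
            μ B * (T₁ (B ⊔ (C ⊔ A)) * T₂ (B ⊔ (C ⊔ A))) := by
      rw [← Finset.sum_filter, Finset.filter_filter]
    rw [e2, csum_lemma hchain p hp hcard μ hμ (C ⊔ A) (fun L => T₁ L * T₂ L), mul_assoc]
  have outer : ∀ C ∈ Finset.univ.filter (fun C : S => IsMin C),
      ∀ A ∈ Finset.univ.filter (fun A : S => IsMin A),
      ∑ B ∈ Finset.univ.filter (fun B : S => IsMin B),
        (if C ≠ A ∧ ¬ B ≤ C ⊔ A then
          μ A * μ B * μ C * T₁ (A ⊔ B) * T₂ (B ⊔ C) * T₃ (C ⊔ A) else 0)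
      = (if C ≠ A then μ C * μ A *
          ((fun M => T₃ M * ∑ L ∈ Finset.univ.filter (fun L : S => ¬ IsMin L),
            (if M < L then μ L * (1 - (p L : ℝ)⁻¹) * (T₁ L * T₂ L) else 0)) (C ⊔ A))
          else 0) := by
    intro C _ A _
    by_cases h : C = A
    · rw [if_neg (fun h' => h' h)]
      exact Finset.sum_eq_zero fun B _ => if_neg (fun h' => h'.1 h)
    · rw [if_pos h, inner C A h]
  rw [Finset.sum_congr rfl (fun C hC => Finset.sum_congr rfl
    (fun A hA => outer C hC A hA))]
  exact pair_lemma hchain p hp hcard μ hμ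
    (fun M => T₃ M * ∑ L ∈ Finset.univ.filter (fun L : S => ¬ IsMin L),
      (if M < L then μ L * (1 - (p L : ℝ)⁻¹) * (T₁ L * T₂ L) else 0))

end TraceCubicAux


open TraceCubicAux in
/-- In a finite directed tree `S` (finite partial order with greatest element `K`,
binary suprema, totally ordered up-sets), where every non-minimal vertex `L`
has exactly `p L ≥ 2` children and the weight `μ` satisfies `μ K > 0` and
`μ J = μ L / p L` for every child `J` of `L`, and `T₁, T₂, T₃ : S → ℝ` are
arbitrary: the cubic trace functional
`Σ_{A,B,C ∈ S_min, pairwise distinct} μ(A)μ(B)μ(C) T₁(sup(A,B)) T₂(sup(B,C)) T₃(sup(C,A))`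
equals the sum over non-minimal vertices given in Lemma 5. -/
theorem trace_cubic_replica_matrices
    {S : Type*} [Fintype S] [SemilatticeSup S]
    (K : S) (hK : ∀ x : S, x ≤ K)
    (hchain : ∀ x y z : S, x ≤ y → x ≤ z → y ≤ z ∨ z ≤ y)
    (p : S → ℕ) (hp : ∀ L : S, ¬ IsMin L → 2 ≤ p L)
    (hcard : ∀ L : S, ¬ IsMin L →
      (Finset.univ.filter (fun J : S => J ⋖ L)).card = p L)
    (μ : S → ℝ) (hμK : 0 < μ K)
    (hμ : ∀ L J : S, J ⋖ L → μ J = μ L / p L)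
    (T₁ T₂ T₃ : S → ℝ) :
    ∑ A ∈ Finset.univ.filter (fun A : S => IsMin A),
      ∑ B ∈ Finset.univ.filter (fun B : S => IsMin B ∧ A ≠ B),
        ∑ C ∈ Finset.univ.filter (fun C : S => IsMin C ∧ B ≠ C ∧ C ≠ A),
          μ A * μ B * μ C * T₁ (A ⊔ B) * T₂ (B ⊔ C) * T₃ (C ⊔ A) =
      (∑ L ∈ Finset.univ.filter (fun L : S => ¬ IsMin L),
        μ L ^ 3 * (1 - (p L : ℝ)⁻¹) * (1 - 2 * (p L : ℝ)⁻¹) *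
          T₁ L * T₂ L * T₃ L)
      + ∑ L ∈ Finset.univ.filter (fun L : S => ¬ IsMin L),
          μ L * (1 - (p L : ℝ)⁻¹) *
            ∑ B ∈ Finset.univ.filter (fun B : S => ¬ IsMin B ∧ B < L),
              μ B ^ 2 * (1 - (p B : ℝ)⁻¹) *
                (T₁ L * T₂ L * T₃ B + T₂ L * T₃ L * T₁ B +
                  T₃ L * T₁ L * T₂ B) := by
  classical
  have step1 : ∀ A ∈ Finset.univ.filter (fun A : S => IsMin A),
      ∑ B ∈ Finset.univ.filter (fun B : S => IsMin B ∧ A ≠ B),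
        ∑ C ∈ Finset.univ.filter (fun C : S => IsMin C ∧ B ≠ C ∧ C ≠ A),
          μ A * μ B * μ C * T₁ (A ⊔ B) * T₂ (B ⊔ C) * T₃ (C ⊔ A)
      = ∑ B ∈ Finset.univ.filter (fun B : S => IsMin B),
          ∑ C ∈ Finset.univ.filter (fun C : S => IsMin C),
            (if A ≠ B then (if B ≠ C ∧ C ≠ A then
              μ A * μ B * μ C * T₁ (A ⊔ B) * T₂ (B ⊔ C) * T₃ (C ⊔ A) else 0) else 0) := by
    intro A _
    rw [← Finset.filter_filter, Finset.sum_filter]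
    refine Finset.sum_congr rfl fun B _ => ?_
    by_cases h : A ≠ B
    · rw [if_pos h, ← Finset.filter_filter, Finset.sum_filter]
      exact Finset.sum_congr rfl fun C _ => (if_pos h).symm
    · rw [if_neg h]
      exact (Finset.sum_eq_zero fun C _ => if_neg h).symm
  rw [Finset.sum_congr rfl step1]
  rw [Finset.sum_congr rfl (fun A _ => Finset.sum_congr rfl (fun B _ =>
    Finset.sum_congr rfl (fun C _ => split_point hchain)))]
  simp only [Finset.sum_add_distrib]
  rw [piece0 hchain p hp hcard μ hμ T₁ T₂ T₃, pieceA hchain p hp hcard μ hμ T₁ T₂ T₃,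
    pieceB hchain p hp hcard μ hμ T₁ T₂ T₃, pieceC hchain p hp hcard μ hμ T₁ T₂ T₃]
  have hfirst : ∑ L ∈ Finset.univ.filter (fun L : S => ¬ IsMin L),
      μ L ^ 3 * (1 - (p L : ℝ)⁻¹) * (1 - 2 * (p L : ℝ)⁻¹) * (T₁ L * T₂ L * T₃ L)
      = ∑ L ∈ Finset.univ.filter (fun L : S => ¬ IsMin L),
          μ L ^ 3 * (1 - (p L : ℝ)⁻¹) * (1 - 2 * (p L : ℝ)⁻¹) * T₁ L * T₂ L * T₃ L :=
    Finset.sum_congr rfl fun L _ => by ring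
  have combine :
      (∑ M ∈ Finset.univ.filter (fun M : S => ¬ IsMin M),
        μ M ^ 2 * (1 - (p M : ℝ)⁻¹) *
          (T₁ M * ∑ L ∈ Finset.univ.filter (fun L : S => ¬ IsMin L),
            (if M < L then μ L * (1 - (p L : ℝ)⁻¹) * (T₂ L * T₃ L) else 0)))
      + (∑ M ∈ Finset.univ.filter (fun M : S => ¬ IsMin M),
        μ M ^ 2 * (1 - (p M : ℝ)⁻¹) *
          (T₂ M * ∑ L ∈ Finset.univ.filter (fun L : S => ¬ IsMin L),
            (if M < L then μ L * (1 - (p L : ℝ)⁻¹) * (T₁ L * T₃ L) else 0)))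
      + (∑ M ∈ Finset.univ.filter (fun M : S => ¬ IsMin M),
        μ M ^ 2 * (1 - (p M : ℝ)⁻¹) *
          (T₃ M * ∑ L ∈ Finset.univ.filter (fun L : S => ¬ IsMin L),
            (if M < L then μ L * (1 - (p L : ℝ)⁻¹) * (T₁ L * T₂ L) else 0)))
      = ∑ M ∈ Finset.univ.filter (fun M : S => ¬ IsMin M),
          ∑ L ∈ Finset.univ.filter (fun L : S => ¬ IsMin L),
            (if M < L then
              μ L * (1 - (p L : ℝ)⁻¹) *
                (μ M ^ 2 * (1 - (p M : ℝ)⁻¹) *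
                  (T₁ L * T₂ L * T₃ M + T₂ L * T₃ L * T₁ M + T₃ L * T₁ L * T₂ M))
              else 0) := by
    rw [← Finset.sum_add_distrib, ← Finset.sum_add_distrib]
    refine Finset.sum_congr rfl fun M _ => ?_
    simp only [Finset.mul_sum]
    rw [← Finset.sum_add_distrib, ← Finset.sum_add_distrib]
    refine Finset.sum_congr rfl fun L _ => ?_
    by_cases hML : M < L
    · rw [if_pos hML, if_pos hML, if_pos hML, if_pos hML]
      ring
    · rw [if_neg hML, if_neg hML, if_neg hML, if_neg hML]
      ring
  have rhs2 : ∑ L ∈ Finset.univ.filter (fun L : S => ¬ IsMin L),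
      μ L * (1 - (p L : ℝ)⁻¹) *
        ∑ B ∈ Finset.univ.filter (fun B : S => ¬ IsMin B ∧ B < L),
          μ B ^ 2 * (1 - (p B : ℝ)⁻¹) *
            (T₁ L * T₂ L * T₃ B + T₂ L * T₃ L * T₁ B + T₃ L * T₁ L * T₂ B)
      = ∑ L ∈ Finset.univ.filter (fun L : S => ¬ IsMin L),
          ∑ M ∈ Finset.univ.filter (fun M : S => ¬ IsMin M),
            (if M < L then
              μ L * (1 - (p L : ℝ)⁻¹) *
                (μ M ^ 2 * (1 - (p M : ℝ)⁻¹) *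
                  (T₁ L * T₂ L * T₃ M + T₂ L * T₃ L * T₁ M + T₃ L * T₁ L * T₂ M))
              else 0) := by
    refine Finset.sum_congr rfl fun L _ => ?_
    rw [← Finset.filter_filter, Finset.sum_filter, Finset.mul_sum]
    refine Finset.sum_congr rfl fun M _ => ?_
    by_cases hML : M < L
    · rw [if_pos hML, if_pos hML]
    · rw [if_neg hML, if_neg hML, mul_zero]
  have hsecond := combine.trans (Finset.sum_comm.trans rhs2.symm)
  linarith [hfirst, hsecond]
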